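/- Assume F1, F2 and h are locally Lipschitz with respect to the variable x. Let C ⊆ D be an open set such that for every z ∈ C the map t ↦ h(t,z) has only isolated zeros in [0,T]. Then the averaged function f is continuous on C. -/

import Mathlib

open Set MeasureTheory Filter Topology

/-- `Real.sign` is measurable. -/
lemma measurable_realSign : Measurable Real.sign := by
  unfold Real.sign
  exact Measurable.ite (measurableSet_lt measurable_id measurable_const) measurable_const
    (Measurable.ite (measurableSet_lt measurable_const measurable_id) measurable_const
      measurable_const)

lemma abs_realSign_le_one (r : ℝ) : |Real.sign r| ≤ 1 := by
  rcases Real.sign_apply_eq r with h | h | h <;> rw [h] <;> norm_num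

/-- `Real.sign` composed with a function tending to a nonzero limit. -/
lemma tendsto_realSign {α : Type*} {l : Filter α} {g : α → ℝ} {a : ℝ} (ha : a ≠ 0)
    (hg : Filter.Tendsto g l (nhds a)) :
    Filter.Tendsto (fun x => Real.sign (g x)) l (nhds (Real.sign a)) := by
  rcases ha.lt_or_gt with h | h
  · have hev : ∀ᶠ x in l, Real.sign (g x) = Real.sign a := by
      filter_upwards [hg (Iio_mem_nhds h)] with x hx
      rw [Real.sign_of_neg hx, Real.sign_of_neg h]
    exact tendsto_nhds_of_eventually_eq hev
  · have hev : ∀ᶠ x in l, Real.sign (g x) = Real.sign a := by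
      filter_upwards [hg (Ioi_mem_nhds h)] with x hx
      rw [Real.sign_of_pos hx, Real.sign_of_pos h]
    exact tendsto_nhds_of_eventually_eq hev

/-- If `F1`, `F2`, `h` are locally Lipschitz in `x` and for every `z` in the open set `C ⊆ D`
the map `t ↦ h(t,z)` has only isolated zeros in `[0,T]`, then the averaged function
`f(z) = ∫₀ᵀ (F1(t,z) + sgn(h(t,z)) • F2(t,z)) dt` is continuous on `C`. -/
theorem averaged_function_continuous {n : ℕ} (T : ℝ) (hT : 0 < T)
    (D : Set (EuclideanSpace ℝ (Fin n))) (hD : IsOpen D)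
    (F1 F2 : ℝ → EuclideanSpace ℝ (Fin n) → EuclideanSpace ℝ (Fin n))
    (h : ℝ → EuclideanSpace ℝ (Fin n) → ℝ)
    (hF1c : ContinuousOn (fun p : ℝ × EuclideanSpace ℝ (Fin n) => F1 p.1 p.2) (univ ×ˢ D))
    (hF2c : ContinuousOn (fun p : ℝ × EuclideanSpace ℝ (Fin n) => F2 p.1 p.2) (univ ×ˢ D))
    (hhc : ContinuousOn (fun p : ℝ × EuclideanSpace ℝ (Fin n) => h p.1 p.2) (univ ×ˢ D))
    (hF1per : ∀ t x, F1 (t + T) x = F1 t x)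
    (hF2per : ∀ t x, F2 (t + T) x = F2 t x)
    (hhper : ∀ t x, h (t + T) x = h t x)
    (hlipF1 : ∀ x₀ ∈ D, ∃ U ∈ nhds x₀, ∃ L : ℝ, ∀ t : ℝ, ∀ x₁ ∈ U ∩ D, ∀ x₂ ∈ U ∩ D,
      ‖F1 t x₁ - F1 t x₂‖ ≤ L * ‖x₁ - x₂‖)
    (hlipF2 : ∀ x₀ ∈ D, ∃ U ∈ nhds x₀, ∃ L : ℝ, ∀ t : ℝ, ∀ x₁ ∈ U ∩ D, ∀ x₂ ∈ U ∩ D,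
      ‖F2 t x₁ - F2 t x₂‖ ≤ L * ‖x₁ - x₂‖)
    (hliph : ∀ x₀ ∈ D, ∃ U ∈ nhds x₀, ∃ L : ℝ, ∀ t : ℝ, ∀ x₁ ∈ U ∩ D, ∀ x₂ ∈ U ∩ D,
      |h t x₁ - h t x₂| ≤ L * ‖x₁ - x₂‖)
    (C : Set (EuclideanSpace ℝ (Fin n))) (hC : IsOpen C) (hCD : C ⊆ D)
    (hiso : ∀ z ∈ C, ∀ t₀ ∈ {t ∈ Icc (0 : ℝ) T | h t z = 0}, ∃ η > 0,
      ∀ t ∈ {t ∈ Icc (0 : ℝ) T | h t z = 0}, |t - t₀| < η → t = t₀) :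
    ContinuousOn
      (fun z => ∫ t in (0 : ℝ)..T, (F1 t z + Real.sign (h t z) • F2 t z)) C := by
  -- joint continuity at interior points
  have keyF1 : ∀ (t : ℝ) (z : EuclideanSpace ℝ (Fin n)), z ∈ D →
      ContinuousAt (fun p : ℝ × EuclideanSpace ℝ (Fin n) => F1 p.1 p.2) (t, z) := fun t z hz =>
    hF1c.continuousAt ((isOpen_univ.prod hD).mem_nhds ⟨trivial, hz⟩)
  have keyF2 : ∀ (t : ℝ) (z : EuclideanSpace ℝ (Fin n)), z ∈ D →
      ContinuousAt (fun p : ℝ × EuclideanSpace ℝ (Fin n) => F2 p.1 p.2) (t, z) := fun t z hz =>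
    hF2c.continuousAt ((isOpen_univ.prod hD).mem_nhds ⟨trivial, hz⟩)
  have keyh : ∀ (t : ℝ) (z : EuclideanSpace ℝ (Fin n)), z ∈ D →
      ContinuousAt (fun p : ℝ × EuclideanSpace ℝ (Fin n) => h p.1 p.2) (t, z) := fun t z hz =>
    hhc.continuousAt ((isOpen_univ.prod hD).mem_nhds ⟨trivial, hz⟩)
  -- continuity in t for fixed z ∈ D
  have contF1t : ∀ z ∈ D, Continuous fun t => F1 t z := by
    intro z hz
    rw [continuous_iff_continuousAt]
    intro t
    have hg : ContinuousAt (fun s : ℝ => (s, z)) t :=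
      (continuous_id.prodMk continuous_const).continuousAt
    exact ContinuousAt.comp (x := t) (keyF1 t z hz) hg
  have contF2t : ∀ z ∈ D, Continuous fun t => F2 t z := by
    intro z hz
    rw [continuous_iff_continuousAt]
    intro t
    have hg : ContinuousAt (fun s : ℝ => (s, z)) t :=
      (continuous_id.prodMk continuous_const).continuousAt
    exact ContinuousAt.comp (x := t) (keyF2 t z hz) hg
  have contht : ∀ z ∈ D, Continuous fun t => h t z := by
    intro z hz
    rw [continuous_iff_continuousAt]
    intro t
    have hg : ContinuousAt (fun s : ℝ => (s, z)) t :=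
      (continuous_id.prodMk continuous_const).continuousAt
    exact ContinuousAt.comp (x := t) (keyh t z hz) hg
  intro z₀ hz₀
  -- a closed ball around z₀ inside C
  obtain ⟨r, hr0, hball⟩ : ∃ r > 0, Metric.closedBall z₀ r ⊆ C := by
    obtain ⟨ε, hε, hsub⟩ := Metric.isOpen_iff.mp hC z₀ hz₀
    exact ⟨ε / 2, by positivity,
      (Metric.closedBall_subset_ball (by linarith)).trans hsub⟩
  -- a uniform bound on the compact set [0,T] × closedBall z₀ r
  have hKc : IsCompact (Icc (0 : ℝ) T ×ˢ Metric.closedBall z₀ r) :=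
    isCompact_Icc.prod (isCompact_closedBall z₀ r)
  have hKsub : Icc (0 : ℝ) T ×ˢ Metric.closedBall z₀ r ⊆ univ ×ˢ D := fun p hp =>
    ⟨trivial, hCD (hball hp.2)⟩
  obtain ⟨M, hM⟩ : ∃ M : ℝ, ∀ p ∈ Icc (0 : ℝ) T ×ˢ Metric.closedBall z₀ r,
      ‖F1 p.1 p.2‖ + ‖F2 p.1 p.2‖ ≤ M := by
    obtain ⟨M, hM⟩ := hKc.exists_bound_of_continuousOn
      (((hF1c.mono hKsub).norm.add (hF2c.mono hKsub).norm))
    exact ⟨M, fun p hp => (le_abs_self _).trans ((Real.norm_eq_abs _) ▸ hM p hp)⟩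
  -- the finite zero set
  set Z : Set ℝ := {t ∈ Icc (0 : ℝ) T | h t z₀ = 0} with hZdef
  have hZclosed : IsCompact Z := by
    have : Z = Icc (0 : ℝ) T ∩ {t | h t z₀ = 0} := rfl
    rw [this]
    exact isCompact_Icc.inter_right (isClosed_eq (contht z₀ (hCD hz₀)) continuous_const)
  have hZdisc : DiscreteTopology Z := by
    rw [discreteTopology_subtype_iff]
    intro x hx
    obtain ⟨η, hη, hx'⟩ := hiso z₀ hz₀ x hx
    rw [← Filter.empty_mem_iff_bot]
    have h1 : Metric.ball x η ∈ 𝓝[≠] x ⊓ Filter.principal Z :=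
      Filter.mem_inf_of_left (mem_nhdsWithin_of_mem_nhds (Metric.ball_mem_nhds x hη))
    have h2 : ({x}ᶜ : Set ℝ) ∈ 𝓝[≠] x ⊓ Filter.principal Z :=
      Filter.mem_inf_of_left self_mem_nhdsWithin
    have h3 : Z ∈ 𝓝[≠] x ⊓ Filter.principal Z :=
      Filter.mem_inf_of_right (Filter.mem_principal_self Z)
    filter_upwards [h1, h2, h3] with t ht1 ht2 ht3
    exact (ht2 (hx' t ht3 (by simpa [Real.dist_eq] using ht1))).elim
  have hZfin : Z.Finite := hZclosed.finite ⟨hZdisc⟩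
  have hZ0 : (volume : Measure ℝ) Z = 0 := hZfin.measure_zero _
  have hZae : ∀ᵐ t : ℝ, t ∉ Z := by
    rw [MeasureTheory.ae_iff]
    simpa using hZ0
  -- apply dominated convergence
  refine intervalIntegral.tendsto_integral_filter_of_dominated_convergence
    (fun _ => M) ?_ ?_ ?_ ?_
  · -- measurability
    filter_upwards [self_mem_nhdsWithin] with z hz
    have hzD : z ∈ D := hCD hz
    have : Measurable fun t => F1 t z + Real.sign (h t z) • F2 t z :=
      ((contF1t z hzD).measurable).add
        ((measurable_realSign.comp (contht z hzD).measurable).smul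
          (contF2t z hzD).measurable)
    exact this.aestronglyMeasurable.restrict
  · -- uniform bound
    have hmem : Metric.closedBall z₀ r ∈ 𝓝[C] z₀ :=
      mem_nhdsWithin_of_mem_nhds (Metric.closedBall_mem_nhds z₀ hr0)
    filter_upwards [hmem] with z hz
    refine Filter.Eventually.of_forall fun t ht => ?_
    have htI : t ∈ Icc (0 : ℝ) T := by
      rw [Set.uIoc_of_le hT.le] at ht
      exact Ioc_subset_Icc_self ht
    have hbd := hM (t, z) ⟨htI, hz⟩
    calc ‖F1 t z + Real.sign (h t z) • F2 t z‖
        ≤ ‖F1 t z‖ + ‖Real.sign (h t z) • F2 t z‖ := norm_add_le _ _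
      _ ≤ ‖F1 t z‖ + ‖F2 t z‖ := by
          refine add_le_add (le_refl _) ?_
          rw [norm_smul, Real.norm_eq_abs]
          calc |Real.sign (h t z)| * ‖F2 t z‖ ≤ 1 * ‖F2 t z‖ :=
                mul_le_mul_of_nonneg_right (abs_realSign_le_one _) (norm_nonneg _)
            _ = ‖F2 t z‖ := one_mul _
      _ ≤ M := hbd
  · -- constant is interval integrable
    exact intervalIntegrable_const
  · -- pointwise convergence a.e.
    filter_upwards [hZae] with t ht htI
    have htIcc : t ∈ Icc (0 : ℝ) T := by
      rw [Set.uIoc_of_le hT.le] at htI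
      exact Ioc_subset_Icc_self htI
    have hne : h t z₀ ≠ 0 := fun h0 => ht ⟨htIcc, h0⟩
    have hF1t : Filter.Tendsto (fun z => F1 t z) (𝓝[C] z₀) (nhds (F1 t z₀)) := by
      have hg : ContinuousAt (fun w : EuclideanSpace ℝ (Fin n) => (t, w)) z₀ :=
        (continuous_const.prodMk continuous_id).continuousAt
      exact (((keyF1 t z₀ (hCD hz₀)).comp hg).continuousWithinAt).tendsto
    have hF2t : Filter.Tendsto (fun z => F2 t z) (𝓝[C] z₀) (nhds (F2 t z₀)) := by
      have hg : ContinuousAt (fun w : EuclideanSpace ℝ (Fin n) => (t, w)) z₀ :=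
        (continuous_const.prodMk continuous_id).continuousAt
      exact (((keyF2 t z₀ (hCD hz₀)).comp hg).continuousWithinAt).tendsto
    have hht : Filter.Tendsto (fun z => h t z) (𝓝[C] z₀) (nhds (h t z₀)) := by
      have hg : ContinuousAt (fun w : EuclideanSpace ℝ (Fin n) => (t, w)) z₀ :=
        (continuous_const.prodMk continuous_id).continuousAt
      exact (((keyh t z₀ (hCD hz₀)).comp hg).continuousWithinAt).tendsto
    exact hF1t.add ((tendsto_realSign hne hht).smul hF2t)
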